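/- arXiv:2307.15181 — 2 statements merged into one kernel-verified Lean document; each statement's English description precedes it below -/
import Mathlib

section
/- Suppose that for n units the joint vector of potential responses (R_1(1),…,R_n(1),R_1(0),…,R_n(0)) is conditionally independent of the assignment vector (A_1,…,A_n) given the σ-algebra generated by (X_1,…,X_n), that the triples (R_i(1), R_i(0), X_i), 1 ≤ i ≤ n, are i.i.d., that there is a single measurable function h: ℝ^{d_x} → [0,1] such that P(A_i = 1 | X_i) = h(X_i) almost surely for every 1 ≤ i ≤ n, and define the observed response R_i = A_i·R_i(1) + (1 − A_i)·R_i(0). Then the random vectors (X_i, A_i, R_i), 1 ≤ i ≤ n, are identically distributed, i.e., the pushforward law of (X_i, A_i, R_i) is the same for every i. (Lemma A.5, second conclusion.) -/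
open MeasureTheory ProbabilityTheory

open scoped NNReal ENNReal

lemma my_indep_mono {Ω : Type*} [mΩ : MeasurableSpace Ω] {μ : Measure Ω}
    {m₁ m₂ m₁' m₂' : MeasurableSpace Ω} (h : Indep m₁' m₂' μ)
    (h1 : m₁ ≤ m₁') (h2 : m₂ ≤ m₂') : Indep m₁ m₂ μ :=
  (Indep_iff _ _ _).2 fun t₁ t₂ ht₁ ht₂ => (Indep_iff _ _ _).1 h t₁ t₂ (h1 _ ht₁) (h2 _ ht₂)

lemma my_integral_mul_condexp {Ω : Type*} {m' : MeasurableSpace Ω} [mΩ : MeasurableSpace Ω]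
    (hm' : m' ≤ mΩ) (μ : Measure Ω) [IsProbabilityMeasure μ]
    {c Z : Ω → ℝ} (hc : StronglyMeasurable[m'] c) (C : ℝ) (hcb : ∀ᵐ ω ∂μ, ‖c ω‖ ≤ C)
    (hZ : Integrable Z μ) :
    ∫ ω, c ω * Z ω ∂μ = ∫ ω, c ω * (μ[Z|m']) ω ∂μ := by
  have hcZ : Integrable (fun ω => c ω * Z ω) μ :=
    hZ.bdd_mul ((hc.mono hm' : StronglyMeasurable[mΩ] c).aestronglyMeasurable) hcb
  have h1 : ∫ ω, c ω * Z ω ∂μ = ∫ ω, (μ[(fun ω => c ω * Z ω)|m']) ω ∂μ :=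
    (integral_condExp hm').symm
  rw [h1]
  exact integral_congr_ae (condExp_mul_of_stronglyMeasurable_left hc hcZ hZ)

lemma my_condexp_indep_sup {Ω : Type*} {mF m₁ m₂ : MeasurableSpace Ω} [mΩ : MeasurableSpace Ω]
    (μ : Measure Ω) [IsProbabilityMeasure μ]
    (hF : mF ≤ mΩ) (h₁ : m₁ ≤ mΩ) (h₂ : m₂ ≤ mΩ)
    (hindep : Indep (mF ⊔ m₁) m₂ μ)
    {f : Ω → ℝ} (hf_int : Integrable f μ) (hf : StronglyMeasurable[mF] f) :
    μ[f | m₁ ⊔ m₂] =ᵐ[μ] μ[f | m₁] := by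
  have hm : m₁ ⊔ m₂ ≤ mΩ := sup_le h₁ h₂
  set C : Set (Set Ω) :=
    {S | ∃ s₁ s₂, MeasurableSet[m₁] s₁ ∧ MeasurableSet[m₂] s₂ ∧ S = s₁ ∩ s₂} with hC
  have hgen : m₁ ⊔ m₂ = MeasurableSpace.generateFrom C := by
    refine le_antisymm (sup_le ?_ ?_) ?_
    · exact fun s hs => MeasurableSpace.measurableSet_generateFrom
        ⟨s, Set.univ, hs, MeasurableSet.univ, (Set.inter_univ s).symm⟩
    · exact fun s hs => MeasurableSpace.measurableSet_generateFrom
        ⟨Set.univ, s, MeasurableSet.univ, hs, (Set.univ_inter s).symm⟩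
    · refine MeasurableSpace.generateFrom_le ?_
      rintro S ⟨s₁, s₂, hs₁, hs₂, rfl⟩
      exact MeasurableSet.inter ((show m₁ ≤ m₁ ⊔ m₂ from le_sup_left) _ hs₁)
        ((show m₂ ≤ m₁ ⊔ m₂ from le_sup_right) _ hs₂)
  have hpi : IsPiSystem C := by
    rintro S ⟨s₁, s₂, hs₁, hs₂, rfl⟩ T ⟨t₁, t₂, ht₁, ht₂, rfl⟩ -
    refine ⟨s₁ ∩ t₁, s₂ ∩ t₂, hs₁.inter ht₁, hs₂.inter ht₂, ?_⟩
    ext x; simp only [Set.mem_inter_iff]; tauto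
  -- key step computation
  have hstep : ∀ (φ : Ω → ℝ), Integrable φ μ → StronglyMeasurable[mF ⊔ m₁] φ →
      ∀ s₁ s₂, MeasurableSet[m₁] s₁ → MeasurableSet[m₂] s₂ →
      ∫ x in s₁ ∩ s₂, φ x ∂μ = (∫ x in s₁, φ x ∂μ) * (μ s₂).toReal := by
    intro φ hφint hφm s₁ s₂ hs₁ hs₂
    have hms₁ : MeasurableSet s₁ := h₁ _ hs₁
    have hms₂ : MeasurableSet s₂ := h₂ _ hs₂
    have hind₁ : StronglyMeasurable[mF ⊔ m₁] (s₁.indicator φ) :=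
      hφm.indicator ((show m₁ ≤ mF ⊔ m₁ from le_sup_right) _ hs₁)
    have hind₂ : StronglyMeasurable[m₂] (s₂.indicator (fun _ => (1 : ℝ))) :=
      stronglyMeasurable_const.indicator hs₂
    have hIF : IndepFun (s₁.indicator φ) (s₂.indicator (fun _ => (1 : ℝ))) μ := by
      refine (IndepFun_iff_Indep _ _ _).2 (my_indep_mono hindep ?_ ?_)
      · exact Measurable.comap_le hind₁.measurable
      · exact Measurable.comap_le hind₂.measurable
    have e1 : ∫ x in s₁ ∩ s₂, φ x ∂μ
        = ∫ x, (s₁.indicator φ * s₂.indicator (fun _ => (1 : ℝ))) x ∂μ := by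
      rw [← integral_indicator (hms₁.inter hms₂)]
      refine integral_congr_ae (Filter.EventuallyEq.of_eq (funext fun x => ?_))
      rw [Pi.mul_apply, ← Set.inter_indicator_mul]
      simp [Set.indicator_apply]
    rw [e1, hIF.integral_mul_eq_mul_integral (hφint.indicator hms₁).aestronglyMeasurable
      ((integrable_const (1 : ℝ)).indicator hms₂).aestronglyMeasurable,
      integral_indicator hms₁, integral_indicator hms₂]
    simp [measureReal_def]
  -- main induction
  have main : ∀ s, MeasurableSet[m₁ ⊔ m₂] s →
      ∫ x in s, (μ[f|m₁]) x ∂μ = ∫ x in s, f x ∂μ := by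
    intro s hs
    refine MeasurableSpace.induction_on_inter (m := m₁ ⊔ m₂)
      (C := fun S _ => ∫ x in S, (μ[f|m₁]) x ∂μ = ∫ x in S, f x ∂μ) (s := C)
      hgen hpi (by simp) ?_ ?_ ?_ s hs
    · rintro S ⟨s₁, s₂, hs₁, hs₂, rfl⟩
      rw [hstep (μ[f|m₁]) integrable_condExp
          (stronglyMeasurable_condExp.mono le_sup_right) s₁ s₂ hs₁ hs₂,
        hstep f hf_int (hf.mono le_sup_left) s₁ s₂ hs₁ hs₂,
        setIntegral_condExp h₁ hf_int hs₁]
    · intro t ht hP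
      have ht' : MeasurableSet t := hm _ ht
      have e1 := integral_add_compl ht' (integrable_condExp : Integrable (μ[f|m₁]) μ)
      have e2 := integral_add_compl ht' hf_int
      have e3 : ∫ x, (μ[f|m₁]) x ∂μ = ∫ x, f x ∂μ := integral_condExp h₁
      linarith
    · intro g hdisj hmeas hP
      rw [integral_iUnion (fun i => hm _ (hmeas i)) hdisj integrable_condExp.integrableOn,
        integral_iUnion (fun i => hm _ (hmeas i)) hdisj hf_int.integrableOn]
      exact tsum_congr hP
  exact (ae_eq_condExp_of_forall_setIntegral_eq hm hf_int
    (fun s _ _ => integrable_condExp.integrableOn)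
    (fun s hs _ => main s hs)
    (((stronglyMeasurable_condExp (m := m₁) (μ := μ) (f := f)).mono
      (le_sup_left : m₁ ≤ m₁ ⊔ m₂)).aestronglyMeasurable (μ := μ))).symm

lemma my_core {Ω : Type*} {m mi mT m2 : MeasurableSpace Ω} [mΩ : MeasurableSpace Ω]
    [StandardBorelSpace Ω] (μ : Measure Ω) [IsProbabilityMeasure μ]
    (hm : m ≤ mΩ) (hmT : mT ≤ mΩ) (hmi_le_mT : mi ≤ mT) (hmi_le_m : mi ≤ m)
    (hm2_le : m2 ≤ mΩ)
    (hm_eq : m = mi ⊔ m2)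
    (hTm2 : Indep mT m2 μ)
    {SF TA s' : Set Ω} (hSF : MeasurableSet[mT] SF) (hs : MeasurableSet[mi] s')
    (hTA : MeasurableSet TA)
    (hmul : (μ⟦SF ∩ TA | m⟧) =ᵐ[μ] fun ω => (μ⟦SF | m⟧) ω * (μ⟦TA | m⟧) ω)
    {H : Ω → ℝ} (hH : StronglyMeasurable[mi] H) (hH01 : ∀ ω, ‖H ω‖ ≤ 1)
    (hprop : (μ[TA.indicator (fun _ => (1:ℝ)) | mi]) =ᵐ[μ] H) :
    (μ (s' ∩ SF ∩ TA)).toReal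
      = ∫ ω, (s'.indicator (fun _ => (1:ℝ))) ω * (SF.indicator (fun _ => (1:ℝ))) ω * H ω ∂μ := by
  classical
  have hmi : mi ≤ mΩ := hmi_le_m.trans hm
  have hSF' : MeasurableSet SF := hmT _ hSF
  have hs' : MeasurableSet s' := hmi _ hs
  have hcs : StronglyMeasurable[mi] (s'.indicator (fun _ => (1:ℝ))) :=
    stronglyMeasurable_const.indicator hs
  have hcs_bd : ∀ ω, ‖(s'.indicator (fun _ => (1:ℝ))) ω‖ ≤ 1 := by
    intro ω; rw [Real.norm_eq_abs, Set.indicator_apply]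
    split <;> simp
  have hcondSF_bd : ∀ᵐ ω ∂μ, ‖(μ⟦SF | mi⟧) ω‖ ≤ 1 := by
    have h1 : ∀ᵐ ω ∂μ, |(μ⟦SF | mi⟧) ω| ≤ ((1:ℝ≥0) : ℝ) := by
      refine ae_bdd_condExp_of_ae_bdd (Filter.Eventually.of_forall fun ω => ?_)
      rw [Set.indicator_apply]; split <;> simp
    filter_upwards [h1] with ω hω
    simpa [Real.norm_eq_abs] using hω
  -- Step 0 : rewrite measure as integral of product
  have step0 : (μ (s' ∩ SF ∩ TA)).toReal
      = ∫ ω, (s'.indicator (fun _ => (1:ℝ))) ω * ((SF ∩ TA).indicator (fun _ => (1:ℝ))) ω ∂μ := by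
    rw [← measureReal_def, ← integral_indicator_one ((hs'.inter hSF').inter hTA)]
    refine integral_congr_ae (Filter.EventuallyEq.of_eq (funext fun ω => ?_))
    rw [← Set.inter_indicator_mul]
    simp only [Set.inter_assoc, one_mul, Pi.one_apply]
    congr 1
  rw [step0]
  -- Step 1 : condition on m
  have step1 : ∫ ω, (s'.indicator (fun _ => (1:ℝ))) ω * ((SF ∩ TA).indicator (fun _ => (1:ℝ))) ω ∂μ
      = ∫ ω, (s'.indicator (fun _ => (1:ℝ))) ω * (μ⟦SF ∩ TA | m⟧) ω ∂μ :=
    my_integral_mul_condexp hm μ (hcs.mono hmi_le_m) 1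
      (Filter.Eventually.of_forall hcs_bd)
      ((integrable_const (1:ℝ)).indicator (hSF'.inter hTA))
  rw [step1]
  -- Step 2 : use conditional independence
  rw [integral_congr_ae (show (fun ω => (s'.indicator (fun _ => (1:ℝ))) ω * (μ⟦SF ∩ TA | m⟧) ω)
    =ᵐ[μ] (fun ω => (s'.indicator (fun _ => (1:ℝ))) ω * ((μ⟦SF | m⟧) ω * (μ⟦TA | m⟧) ω)) from
    Filter.EventuallyEq.mul (Filter.EventuallyEq.refl _ _) hmul)]
  -- Step 3 : replace μ⟦SF|m⟧ by μ⟦SF|mi⟧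
  have hrepl : (μ⟦SF | m⟧) =ᵐ[μ] (μ⟦SF | mi⟧) := by
    rw [hm_eq]
    exact my_condexp_indep_sup μ hmT hmi hm2_le
      (my_indep_mono hTm2 (sup_le le_rfl hmi_le_mT) le_rfl)
      ((integrable_const (1:ℝ)).indicator hSF')
      (stronglyMeasurable_const.indicator hSF)
  rw [integral_congr_ae (show (fun ω => (s'.indicator (fun _ => (1:ℝ))) ω * ((μ⟦SF | m⟧) ω * (μ⟦TA | m⟧) ω))
    =ᵐ[μ] (fun ω => (s'.indicator (fun _ => (1:ℝ))) ω * ((μ⟦SF | mi⟧) ω * (μ⟦TA | m⟧) ω)) from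
    Filter.EventuallyEq.mul (Filter.EventuallyEq.refl _ _)
    (Filter.EventuallyEq.mul hrepl (Filter.EventuallyEq.refl _ _)))]
  -- Step 4 : tower property, pulling the TA-condexp down to mi
  have hbd1 : ∀ᵐ ω ∂μ, ‖(s'.indicator (fun _ => (1:ℝ))) ω * (μ⟦SF | mi⟧) ω‖ ≤ 1 := by
    filter_upwards [hcondSF_bd] with ω hω
    rw [norm_mul]
    exact mul_le_one₀ (hcs_bd ω) (norm_nonneg _) hω
  have e4 : ∫ ω, ((s'.indicator (fun _ => (1:ℝ))) ω * (μ⟦SF | mi⟧) ω) * (μ⟦TA | m⟧) ω ∂μ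
      = ∫ ω, ((s'.indicator (fun _ => (1:ℝ))) ω * (μ⟦SF | mi⟧) ω) * (μ[(μ⟦TA | m⟧) | mi]) ω ∂μ :=
    my_integral_mul_condexp hmi μ (hcs.mul stronglyMeasurable_condExp) 1 hbd1
      integrable_condExp
  have step4 : ∫ ω, (s'.indicator (fun _ => (1:ℝ))) ω * ((μ⟦SF | mi⟧) ω * (μ⟦TA | m⟧) ω) ∂μ
      = ∫ ω, ((s'.indicator (fun _ => (1:ℝ))) ω * (μ⟦SF | mi⟧) ω) * (μ[(μ⟦TA | m⟧) | mi]) ω ∂μ := by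
    rw [← e4]
    refine integral_congr_ae (Filter.EventuallyEq.of_eq (funext fun ω => ?_))
    ring
  rw [step4]
  have htower : (μ[(μ⟦TA | m⟧) | mi]) =ᵐ[μ] H :=
    (condExp_condExp_of_le hmi_le_m hm).trans hprop
  rw [integral_congr_ae (show (fun ω => ((s'.indicator (fun _ => (1:ℝ))) ω * (μ⟦SF | mi⟧) ω) * (μ[(μ⟦TA | m⟧) | mi]) ω)
    =ᵐ[μ] (fun ω => ((s'.indicator (fun _ => (1:ℝ))) ω * (μ⟦SF | mi⟧) ω) * H ω) from
    Filter.EventuallyEq.mul (Filter.EventuallyEq.refl _ _) htower)]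
  -- Step 5 : remove the SF-condexp
  have hcH : StronglyMeasurable[mi] (fun ω => (s'.indicator (fun _ => (1:ℝ))) ω * H ω) :=
    hcs.mul hH
  have hcH_bd : ∀ᵐ ω ∂μ, ‖(s'.indicator (fun _ => (1:ℝ))) ω * H ω‖ ≤ 1 := by
    refine Filter.Eventually.of_forall fun ω => ?_
    rw [norm_mul]
    exact mul_le_one₀ (hcs_bd ω) (norm_nonneg _) (hH01 ω)
  have e5 : ∫ ω, ((s'.indicator (fun _ => (1:ℝ))) ω * H ω) * (SF.indicator (fun _ => (1:ℝ))) ω ∂μ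
      = ∫ ω, ((s'.indicator (fun _ => (1:ℝ))) ω * H ω) * (μ⟦SF | mi⟧) ω ∂μ :=
    my_integral_mul_condexp hmi μ hcH 1 hcH_bd
      ((integrable_const (1:ℝ)).indicator hSF')
  have step5 : ∫ ω, ((s'.indicator (fun _ => (1:ℝ))) ω * (μ⟦SF | mi⟧) ω) * H ω ∂μ
      = ∫ ω, ((s'.indicator (fun _ => (1:ℝ))) ω * H ω) * (SF.indicator (fun _ => (1:ℝ))) ω ∂μ := by
    rw [e5]
    refine integral_congr_ae (Filter.EventuallyEq.of_eq (funext fun ω => ?_))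
    ring
  rw [step5]
  refine integral_congr_ae (Filter.EventuallyEq.of_eq (funext fun ω => ?_))
  ring


/-- **Lemma A.5, second conclusion.** If the joint vector of potential
responses `(R^{(n)}(1), R^{(n)}(0))` is conditionally independent of the assignment vector
`A^{(n)}` given `σ(X^{(n)})`, the triples `(R_i(1), R_i(0), X_i)` are i.i.d., and
`P(A_i = 1 | X_i) = h(X_i)` a.s. for a single measurable `h : ℝ^{d_x} → [0,1]` for every
`i`, then with observed responses `R_i = A_i·R_i(1) + (1 − A_i)·R_i(0)`, the random
vectors `(X_i, A_i, R_i)` are identically distributed across `i`. -/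
theorem identically_distributed_observables
    {Ω : Type*} [MeasurableSpace Ω] [StandardBorelSpace Ω]
    (μ : Measure Ω) [IsProbabilityMeasure μ]
    (n dx dr : ℕ)
    (X : Fin n → Ω → (Fin dx → ℝ)) (A : Fin n → Ω → ℝ)
    (R1 R0 : Fin n → Ω → (Fin dr → ℝ))
    (hX : ∀ i, Measurable (X i)) (hA : ∀ i, Measurable (A i))
    (hR1 : ∀ i, Measurable (R1 i)) (hR0 : ∀ i, Measurable (R0 i))
    (hA01 : ∀ i ω, A i ω = 0 ∨ A i ω = 1)
    -- joint unconfoundedness: (R^{(n)}(1), R^{(n)}(0)) ⫫ A^{(n)} | σ(X^{(n)})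
    (hUnconf : CondIndepFun
      (MeasurableSpace.comap (fun ω => fun i => X i ω) inferInstance)
      (Measurable.comap_le (measurable_pi_lambda _ fun i => hX i))
      (fun ω => (fun i => R1 i ω, fun i => R0 i ω))
      (fun ω => fun i => A i ω) μ)
    -- the triples (R_i(1), R_i(0), X_i) are i.i.d.
    (hIdent : ∀ i j : Fin n,
      Measure.map (fun ω => (R1 i ω, R0 i ω, X i ω)) μ
        = Measure.map (fun ω => (R1 j ω, R0 j ω, X j ω)) μ)
    (hIndep : iIndepFun
      (fun i ω => (R1 i ω, R0 i ω, X i ω)) μ)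
    -- a single propensity function h : ℝ^{d_x} → [0,1] for all units
    (h : (Fin dx → ℝ) → ℝ) (hh : Measurable h)
    (hh01 : ∀ x, h x ∈ Set.Icc (0 : ℝ) 1)
    (hprop : ∀ i, MeasureTheory.condExp (MeasurableSpace.comap (X i) inferInstance) μ
        (fun ω => if A i ω = 1 then (1 : ℝ) else 0) =ᵐ[μ] fun ω => h (X i ω))
    -- observed responses R_i = A_i·R_i(1) + (1 − A_i)·R_i(0)
    (R : Fin n → Ω → (Fin dr → ℝ))
    (hR : ∀ i, R i = fun ω => A i ω • R1 i ω + (1 - A i ω) • R0 i ω) :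
    -- conclusion: (X_i, A_i, R_i) is identically distributed across i
    ∀ i j : Fin n,
      Measure.map (fun ω => (X i ω, A i ω, R i ω)) μ
        = Measure.map (fun ω => (X j ω, A j ω, R j ω)) μ := by
  classical
  intro i j
  -- measurability of the various bundled maps
  have hT : ∀ k, Measurable (fun ω => (R1 k ω, R0 k ω, X k ω)) :=
    fun k => (hR1 k).prodMk ((hR0 k).prodMk (hX k))
  have hP : ∀ k, Measurable (fun ω => (R1 k ω, R0 k ω)) :=
    fun k => (hR1 k).prodMk (hR0 k)
  have hZm : ∀ k, Measurable (fun ω => (X k ω, A k ω)) :=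
    fun k => (hX k).prodMk (hA k)
  have hQ : ∀ k, Measurable (fun ω => ((R1 k ω, R0 k ω), (X k ω, A k ω))) :=
    fun k => (hP k).prodMk (hZm k)
  -- σ-algebra facts
  have hmle : MeasurableSpace.comap (fun ω => fun k => X k ω) inferInstance
      ≤ ‹MeasurableSpace Ω› :=
    Measurable.comap_le (measurable_pi_lambda _ fun k => hX k)
  have hmi_le_mT : ∀ k, MeasurableSpace.comap (X k) inferInstance
      ≤ MeasurableSpace.comap (fun ω => (R1 k ω, R0 k ω, X k ω)) inferInstance := by
    intro k
    have h1 : (MeasurableSpace.comap (X k) inferInstance : MeasurableSpace Ω)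
        = MeasurableSpace.comap (fun ω => (R1 k ω, R0 k ω, X k ω))
          (MeasurableSpace.comap
            (fun p : (Fin dr → ℝ) × (Fin dr → ℝ) × (Fin dx → ℝ) => p.2.2) inferInstance) :=
      (MeasurableSpace.comap_comp
        (f := fun p : (Fin dr → ℝ) × (Fin dr → ℝ) × (Fin dx → ℝ) => p.2.2)
        (g := fun ω => (R1 k ω, R0 k ω, X k ω))).symm
    rw [h1]
    exact MeasurableSpace.comap_mono
      (Measurable.comap_le (measurable_snd.comp measurable_snd))
  have hm_eq : ∀ k, MeasurableSpace.comap (fun ω => fun k' => X k' ω) inferInstance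
      = (MeasurableSpace.comap (X k) inferInstance)
        ⊔ (⨆ k' ∈ ({k}ᶜ : Set (Fin n)), MeasurableSpace.comap (X k') inferInstance) := by
    intro k
    have h1 : MeasurableSpace.comap (fun ω => fun k' => X k' ω) inferInstance
        = ⨆ k', MeasurableSpace.comap (X k') inferInstance := by
      have h2 : (inferInstance : MeasurableSpace (Fin n → Fin dx → ℝ))
          = ⨆ k', MeasurableSpace.comap (fun f : Fin n → Fin dx → ℝ => f k') inferInstance := rfl
      rw [h2, MeasurableSpace.comap_iSup]
      exact iSup_congr fun k' => MeasurableSpace.comap_comp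
        (f := fun f : Fin n → Fin dx → ℝ => f k') (g := fun ω => fun k'' => X k'' ω)
    rw [h1]
    refine le_antisymm (iSup_le fun k' => ?_) (sup_le (le_iSup (fun k' => MeasurableSpace.comap (X k') inferInstance) k) (iSup₂_le fun k' _ => le_iSup (fun k'' => MeasurableSpace.comap (X k'') inferInstance) k'))
    by_cases hk : k' = k
    · subst hk; exact le_sup_left
    · exact le_sup_of_le_right (le_iSup₂ (f := fun k'' _ => MeasurableSpace.comap (X k'') inferInstance) k' (by simp [hk]))
  have hm2_le : ∀ k, (⨆ k' ∈ ({k}ᶜ : Set (Fin n)), MeasurableSpace.comap (X k') inferInstance)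
      ≤ ‹MeasurableSpace Ω› :=
    fun k => iSup₂_le fun k' _ => (hX k').comap_le
  have hmi_le_m : ∀ k, MeasurableSpace.comap (X k) inferInstance
      ≤ MeasurableSpace.comap (fun ω => fun k' => X k' ω) inferInstance :=
    fun k => (hm_eq k) ▸ le_sup_left
  have hTm2 : ∀ k, Indep
      (MeasurableSpace.comap (fun ω => (R1 k ω, R0 k ω, X k ω)) inferInstance)
      (⨆ k' ∈ ({k}ᶜ : Set (Fin n)), MeasurableSpace.comap (X k') inferInstance) μ := by
    intro k
    have hbig := indep_biSup_compl (fun k' => (hT k').comap_le) hIndep.iIndep {k}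
    refine my_indep_mono hbig ?_ ?_
    · exact le_iSup₂ (f := fun k'' (_ : k'' ∈ ({k} : Set (Fin n))) =>
        MeasurableSpace.comap (fun ω => (R1 k'' ω, R0 k'' ω, X k'' ω)) inferInstance) k rfl
    · exact iSup₂_le fun k' hk' => (hmi_le_mT k').trans
        (le_iSup₂ (f := fun k'' (_ : k'' ∈ ({k}ᶜ : Set (Fin n))) =>
          MeasurableSpace.comap (fun ω => (R1 k'' ω, R0 k'' ω, X k'' ω)) inferInstance) k' hk')
  -- the key conditional-independence computation
  have key : ∀ (k : Fin n) (W : Set ((Fin dr → ℝ) × (Fin dr → ℝ))) (s : Set (Fin dx → ℝ)),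
      MeasurableSet W → MeasurableSet s →
      (μ ((X k ⁻¹' s) ∩ ((fun ω => (R1 k ω, R0 k ω)) ⁻¹' W) ∩ {ω | A k ω = 1})).toReal
        = ∫ q, (s.indicator (fun _ => (1:ℝ)) q.2.2) * (W.indicator (fun _ => (1:ℝ)) (q.1, q.2.1))
            * h q.2.2 ∂(Measure.map (fun ω => (R1 k ω, R0 k ω, X k ω)) μ) := by
    intro k W s hW hs
    have hSF : MeasurableSet[MeasurableSpace.comap (fun ω => (R1 k ω, R0 k ω, X k ω)) inferInstance]
        ((fun ω => (R1 k ω, R0 k ω)) ⁻¹' W) :=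
      ⟨(fun q : (Fin dr → ℝ) × (Fin dr → ℝ) × (Fin dx → ℝ) => (q.1, q.2.1)) ⁻¹' W,
        (measurable_fst.prodMk (measurable_fst.comp measurable_snd)) hW, rfl⟩
    have hsm : MeasurableSet[MeasurableSpace.comap (X k) inferInstance] (X k ⁻¹' s) :=
      ⟨s, hs, rfl⟩
    have hTA : MeasurableSet {ω | A k ω = 1} := (hA k) (measurableSet_singleton 1)
    have hmul : (μ⟦((fun ω => (R1 k ω, R0 k ω)) ⁻¹' W) ∩ {ω | A k ω = 1} |
        MeasurableSpace.comap (fun ω => fun k' => X k' ω) inferInstance⟧)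
        =ᵐ[μ] fun ω =>
          (μ⟦((fun ω => (R1 k ω, R0 k ω)) ⁻¹' W) |
            MeasurableSpace.comap (fun ω => fun k' => X k' ω) inferInstance⟧) ω
          * (μ⟦{ω | A k ω = 1} |
            MeasurableSpace.comap (fun ω => fun k' => X k' ω) inferInstance⟧) ω := by
      have hf : Measurable (fun ω => (fun i => R1 i ω, fun i => R0 i ω)) :=
        (measurable_pi_lambda _ fun k' => hR1 k').prodMk (measurable_pi_lambda _ fun k' => hR0 k')
      have hg : Measurable (fun ω => fun i => A i ω) := measurable_pi_lambda _ fun k' => hA k'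
      have hSS : MeasurableSet
          ((fun p : (Fin n → Fin dr → ℝ) × (Fin n → Fin dr → ℝ) => (p.1 k, p.2 k)) ⁻¹' W) :=
        (((measurable_pi_apply k).comp measurable_fst).prodMk
          ((measurable_pi_apply k).comp measurable_snd)) hW
      have hTT : MeasurableSet {a : Fin n → ℝ | a k = 1} :=
        (measurable_pi_apply k) (measurableSet_singleton 1)
      exact (condIndepFun_iff_condExp_inter_preimage_eq_mul hf hg).1 hUnconf _ _ hSS hTT
    have hprop' : (μ[({ω | A k ω = 1}).indicator (fun _ => (1:ℝ)) |
        MeasurableSpace.comap (X k) inferInstance]) =ᵐ[μ] fun ω => h (X k ω) := by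
      have heq : ({ω | A k ω = 1}).indicator (fun _ => (1:ℝ))
          = fun ω => if A k ω = 1 then (1:ℝ) else 0 := by
        funext ω; simp [Set.indicator_apply, Set.mem_setOf_eq]
      rw [heq]; exact hprop k
    have hH : StronglyMeasurable[MeasurableSpace.comap (X k) inferInstance]
        (fun ω => h (X k ω)) :=
      (hh.comp (Measurable.of_comap_le le_rfl)).stronglyMeasurable
    have hH01 : ∀ ω, ‖h (X k ω)‖ ≤ 1 := by
      intro ω
      rw [Real.norm_eq_abs, abs_le]
      exact ⟨le_trans (by norm_num) (hh01 _).1, (hh01 _).2⟩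
    have hres := my_core μ hmle (hT k).comap_le (hmi_le_mT k) (hmi_le_m k) (hm2_le k)
      (hm_eq k) (hTm2 k) hSF hsm hTA hmul hH hH01 hprop'
    rw [hres]
    have hG3 : Measurable (fun q : (Fin dr → ℝ) × (Fin dr → ℝ) × (Fin dx → ℝ) =>
        (s.indicator (fun _ => (1:ℝ)) q.2.2) * (W.indicator (fun _ => (1:ℝ)) (q.1, q.2.1))
          * h q.2.2) := by
      refine Measurable.mul (Measurable.mul ?_ ?_) (hh.comp (measurable_snd.comp measurable_snd))
      · exact (measurable_const.indicator hs).comp (measurable_snd.comp measurable_snd)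
      · exact (measurable_const.indicator hW).comp
          (measurable_fst.prodMk (measurable_fst.comp measurable_snd))
    rw [integral_map (hT k).aemeasurable hG3.aestronglyMeasurable]
    refine integral_congr_ae (Filter.EventuallyEq.of_eq (funext fun ω => ?_))
    by_cases hx : X k ω ∈ s <;> by_cases hw : (R1 k ω, R0 k ω) ∈ W <;>
      simp [Set.indicator_apply, hx, hw]
  -- base quantity : μ (X⁻¹s ∩ P⁻¹W) through the law of the triple
  have base : ∀ (k : Fin n) (W : Set ((Fin dr → ℝ) × (Fin dr → ℝ))) (s : Set (Fin dx → ℝ)),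
      MeasurableSet W → MeasurableSet s →
      μ ((X k ⁻¹' s) ∩ ((fun ω => (R1 k ω, R0 k ω)) ⁻¹' W))
        = (Measure.map (fun ω => (R1 k ω, R0 k ω, X k ω)) μ)
            {q : (Fin dr → ℝ) × (Fin dr → ℝ) × (Fin dx → ℝ) | (q.1, q.2.1) ∈ W ∧ q.2.2 ∈ s} := by
    intro k W s hW hs
    have hB : MeasurableSet
        {q : (Fin dr → ℝ) × (Fin dr → ℝ) × (Fin dx → ℝ) | (q.1, q.2.1) ∈ W ∧ q.2.2 ∈ s} := by
      refine MeasurableSet.inter ?_ ?_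
      · exact (measurable_fst.prodMk (measurable_fst.comp measurable_snd)) hW
      · exact (measurable_snd.comp measurable_snd) hs
    rw [Measure.map_apply (hT k) hB]
    congr 1
    ext ω
    simp only [Set.mem_inter_iff, Set.mem_preimage, Set.mem_setOf_eq]
    tauto
  -- the joint laws of ((R1,R0),(X,A)) coincide
  have hρ : Measure.map (fun ω => ((R1 i ω, R0 i ω), (X i ω, A i ω))) μ
      = Measure.map (fun ω => ((R1 j ω, R0 j ω), (X j ω, A j ω))) μ := by
    haveI h1 : IsProbabilityMeasure (Measure.map (fun ω => ((R1 i ω, R0 i ω), (X i ω, A i ω))) μ) :=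
      Measure.isProbabilityMeasure_map (hQ i).aemeasurable
    haveI h2 : IsProbabilityMeasure (Measure.map (fun ω => ((R1 j ω, R0 j ω), (X j ω, A j ω))) μ) :=
      Measure.isProbabilityMeasure_map (hQ j).aemeasurable
    refine ext_of_generate_finite _ generateFrom_prod.symm isPiSystem_prod ?_ ?_
    swap
    · rw [measure_univ, measure_univ]
    rintro _ ⟨W, hW0, D, hD0, rfl⟩
    have hW : MeasurableSet W := hW0
    have hD : MeasurableSet D := hD0
    rw [Measure.map_apply (hQ i) (hW.prod hD), Measure.map_apply (hQ j) (hW.prod hD)]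
    have hpre : ∀ k, (fun ω => ((R1 k ω, R0 k ω), (X k ω, A k ω))) ⁻¹' (W ×ˢ D)
        = ((fun ω => (R1 k ω, R0 k ω)) ⁻¹' W) ∩ ((fun ω => (X k ω, A k ω)) ⁻¹' D) :=
      fun k => Set.mk_preimage_prod _ _
    rw [hpre i, hpre j]
    have hν : ∀ k, μ (((fun ω => (R1 k ω, R0 k ω)) ⁻¹' W) ∩ ((fun ω => (X k ω, A k ω)) ⁻¹' D))
        = Measure.map (fun ω => (X k ω, A k ω))
            (μ.restrict ((fun ω => (R1 k ω, R0 k ω)) ⁻¹' W)) D := by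
      intro k
      rw [Measure.map_apply (hZm k) hD, Measure.restrict_apply ((hZm k) hD)]
      exact congrArg μ (Set.inter_comm _ _)
    rw [hν i, hν j]
    -- equality of the restricted laws
    have hνeq : Measure.map (fun ω => (X i ω, A i ω))
          (μ.restrict ((fun ω => (R1 i ω, R0 i ω)) ⁻¹' W))
        = Measure.map (fun ω => (X j ω, A j ω))
          (μ.restrict ((fun ω => (R1 j ω, R0 j ω)) ⁻¹' W)) := by
      haveI hf1 : IsFiniteMeasure (Measure.map (fun ω => (X i ω, A i ω))
          (μ.restrict ((fun ω => (R1 i ω, R0 i ω)) ⁻¹' W))) :=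
        Measure.isFiniteMeasure_map _ _
      refine ext_of_generate_finite _ generateFrom_prod.symm isPiSystem_prod ?_ ?_
      · rintro _ ⟨s, hs0, t, ht0, rfl⟩
        have hs : MeasurableSet s := hs0
        have ht : MeasurableSet t := ht0
        rw [Measure.map_apply (hZm i) (hs.prod ht), Measure.map_apply (hZm j) (hs.prod ht),
          Measure.restrict_apply ((hZm i) (hs.prod ht)),
          Measure.restrict_apply ((hZm j) (hs.prod ht))]
        have hpre2 : ∀ k, (fun ω => (X k ω, A k ω)) ⁻¹' (s ×ˢ t)
            = (X k ⁻¹' s) ∩ ((fun ω => A k ω) ⁻¹' t) := fun k => Set.mk_preimage_prod _ _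
        rw [hpre2 i, hpre2 j]
        -- key measure identities
        have hval1 : μ ((X i ⁻¹' s) ∩ ((fun ω => (R1 i ω, R0 i ω)) ⁻¹' W) ∩ {ω | A i ω = 1})
            = μ ((X j ⁻¹' s) ∩ ((fun ω => (R1 j ω, R0 j ω)) ⁻¹' W) ∩ {ω | A j ω = 1}) := by
          rw [← ENNReal.ofReal_toReal (measure_ne_top μ _),
            ← ENNReal.ofReal_toReal (measure_ne_top μ
              ((X j ⁻¹' s) ∩ ((fun ω => (R1 j ω, R0 j ω)) ⁻¹' W) ∩ {ω | A j ω = 1})),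
            key i W s hW hs, key j W s hW hs, hIdent i j]
        have hbase : μ ((X i ⁻¹' s) ∩ ((fun ω => (R1 i ω, R0 i ω)) ⁻¹' W))
            = μ ((X j ⁻¹' s) ∩ ((fun ω => (R1 j ω, R0 j ω)) ⁻¹' W)) := by
          rw [base i W s hW hs, base j W s hW hs, hIdent i j]
        by_cases h1 : (1:ℝ) ∈ t <;> by_cases h0 : (0:ℝ) ∈ t
        · -- both : the A-constraint is vacuous
          have ht' : ∀ k : Fin n, (fun ω => A k ω) ⁻¹' t = Set.univ := by
            intro k
            refine Set.eq_univ_of_forall fun ω => ?_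
            rcases hA01 k ω with hω | hω <;> simp [Set.mem_preimage, hω, h0, h1]
          rw [ht' i, ht' j, Set.inter_univ, Set.inter_univ]
          exact hbase
        · -- 1 ∈ t, 0 ∉ t : the A-constraint is {A = 1}
          have ht' : ∀ k : Fin n, (fun ω => A k ω) ⁻¹' t = {ω | A k ω = 1} := by
            intro k
            ext ω
            rcases hA01 k ω with hω | hω <;> simp [Set.mem_preimage, hω, h0, h1]
          rw [ht' i, ht' j]
          have hre : ∀ k : Fin n, (X k ⁻¹' s) ∩ {ω | A k ω = 1}
              ∩ ((fun ω => (R1 k ω, R0 k ω)) ⁻¹' W)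
              = (X k ⁻¹' s) ∩ ((fun ω => (R1 k ω, R0 k ω)) ⁻¹' W) ∩ {ω | A k ω = 1} := by
            intro k; ext ω; simp only [Set.mem_inter_iff]; tauto
          rw [hre i, hre j]
          exact hval1
        · -- 0 ∈ t, 1 ∉ t : the A-constraint is {A = 1}ᶜ
          have ht' : ∀ k : Fin n, (fun ω => A k ω) ⁻¹' t = {ω | A k ω = 1}ᶜ := by
            intro k
            ext ω
            rcases hA01 k ω with hω | hω <;>
              simp [Set.mem_preimage, hω, h0, h1]
          rw [ht' i, ht' j]
          have hre : ∀ k : Fin n, (X k ⁻¹' s) ∩ {ω | A k ω = 1}ᶜ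
              ∩ ((fun ω => (R1 k ω, R0 k ω)) ⁻¹' W)
              = ((X k ⁻¹' s) ∩ ((fun ω => (R1 k ω, R0 k ω)) ⁻¹' W))
                \ ((X k ⁻¹' s) ∩ ((fun ω => (R1 k ω, R0 k ω)) ⁻¹' W) ∩ {ω | A k ω = 1}) := by
            intro k; ext ω
            simp only [Set.mem_inter_iff, Set.mem_diff, Set.mem_compl_iff, Set.mem_setOf_eq]
            tauto
          rw [hre i, hre j,
            measure_diff Set.inter_subset_left
              (((((hX i) hs).inter ((hP i) hW)).inter
                (show MeasurableSet {ω | A i ω = 1} from (hA i) (measurableSet_singleton 1))) :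
                MeasurableSet ((X i ⁻¹' s) ∩ ((fun ω => (R1 i ω, R0 i ω)) ⁻¹' W)
                  ∩ {ω | A i ω = 1})).nullMeasurableSet
              (measure_ne_top μ _),
            measure_diff Set.inter_subset_left
              (((((hX j) hs).inter ((hP j) hW)).inter
                (show MeasurableSet {ω | A j ω = 1} from (hA j) (measurableSet_singleton 1))) :
                MeasurableSet ((X j ⁻¹' s) ∩ ((fun ω => (R1 j ω, R0 j ω)) ⁻¹' W)
                  ∩ {ω | A j ω = 1})).nullMeasurableSet
              (measure_ne_top μ _),
            hbase, hval1]
        · -- neither : empty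
          have ht' : ∀ k : Fin n, (fun ω => A k ω) ⁻¹' t = ∅ := by
            intro k
            refine Set.eq_empty_iff_forall_notMem.2 fun ω hω => ?_
            rcases hA01 k ω with h' | h' <;> rw [Set.mem_preimage, h'] at hω <;> tauto
          rw [ht' i, ht' j]
          simp
      · -- univ
        rw [Measure.map_apply (hZm i) MeasurableSet.univ,
          Measure.map_apply (hZm j) MeasurableSet.univ]
        simp only [Set.preimage_univ, Measure.restrict_apply_univ]
        have hb : ∀ k : Fin n, μ ((fun ω => (R1 k ω, R0 k ω)) ⁻¹' W)
            = μ ((X k ⁻¹' Set.univ) ∩ ((fun ω => (R1 k ω, R0 k ω)) ⁻¹' W)) := by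
          intro k; rw [Set.preimage_univ, Set.univ_inter]
        rw [hb i, hb j, base i W Set.univ hW MeasurableSet.univ,
          base j W Set.univ hW MeasurableSet.univ, hIdent i j]
    rw [hνeq]
  -- conclude by pushing forward through Φ
  have hΦ : Measurable (fun q : ((Fin dr → ℝ) × (Fin dr → ℝ)) × ((Fin dx → ℝ) × ℝ) =>
      (q.2.1, q.2.2, q.2.2 • q.1.1 + (1 - q.2.2) • q.1.2)) := by
    refine (measurable_fst.comp measurable_snd).prodMk
      ((measurable_snd.comp measurable_snd).prodMk ?_)
    refine Measurable.add ?_ ?_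
    · exact (measurable_snd.comp measurable_snd).smul (measurable_fst.comp measurable_fst)
    · exact (measurable_const.sub (measurable_snd.comp measurable_snd)).smul
        (measurable_snd.comp measurable_fst)
  have hcomp : ∀ k : Fin n, (fun ω => (X k ω, A k ω, R k ω))
      = (fun q : ((Fin dr → ℝ) × (Fin dr → ℝ)) × ((Fin dx → ℝ) × ℝ) =>
          (q.2.1, q.2.2, q.2.2 • q.1.1 + (1 - q.2.2) • q.1.2))
        ∘ (fun ω => ((R1 k ω, R0 k ω), (X k ω, A k ω))) := by
    intro k
    funext ω
    simp [hR k]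
  rw [hcomp i, hcomp j, ← Measure.map_map hΦ (hQ i), ← Measure.map_map hΦ (hQ j), hρ]
end

section
/- For a function f: ℝ^{d_x} → ℝ, positive integers ℓ < k, and points x₁, …, x_k ∈ ℝ^{d_x}, define h_f(x₁,…,x_k) = max over subsets I ⊆ {1,…,k} with |I| = ℓ of ( (1/ℓ)·Σ_{i∈I} f(x_i) − (1/(k−ℓ))·Σ_{i∉I} f(x_i) ) minus the minimum over such subsets of the same quantity. Then for all functions f, g: ℝ^{d_x} → ℝ and all x₁,…,x_k ∈ ℝ^{d_x}, |h_f(x₁,…,x_k) − h_g(x₁,…,x_k)|² ≤ 4k · Σ_{i=1}^{k} (f(x_i) − g(x_i))². (Lemma A.7.) -/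
/-- The within-block contrast `(1/ℓ)·Σ_{i∈I} v i − (1/(k−ℓ))·Σ_{i∉I} v i` associated to a
subset `I` of `{1,…,k}` of cardinality `ℓ`. -/
noncomputable def blockContrast (k ℓ : ℕ) (v : Fin k → ℝ) (I : Finset (Fin k)) : ℝ :=
  (1 / (ℓ : ℝ)) * ∑ i ∈ I, v i - (1 / ((k - ℓ : ℕ) : ℝ)) * ∑ i ∈ Iᶜ, v i

/-- `h_f(x₁,…,x_k)`: the range (max minus min) of the within-block contrasts of `v` over
all subsets `I ⊆ {1,…,k}` with `|I| = ℓ`. -/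
noncomputable def contrastRange (k ℓ : ℕ) (v : Fin k → ℝ) : ℝ :=
  sSup {r : ℝ | ∃ I : Finset (Fin k), I.card = ℓ ∧ r = blockContrast k ℓ v I}
    - sInf {r : ℝ | ∃ I : Finset (Fin k), I.card = ℓ ∧ r = blockContrast k ℓ v I}

lemma blockContrast_diff_le (k ℓ : ℕ) (hℓ : 1 ≤ ℓ) (hℓk : ℓ < k)
    (v w : Fin k → ℝ) (I : Finset (Fin k)) :
    |blockContrast k ℓ v I - blockContrast k ℓ w I| ≤ ∑ i, |v i - w i| := by
  have h1 : (1 : ℝ) / (ℓ : ℝ) ≤ 1 :=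
    div_le_one_of_le₀ (by exact_mod_cast hℓ) (by positivity)
  have h2 : (1 : ℝ) / ((k - ℓ : ℕ) : ℝ) ≤ 1 :=
    div_le_one_of_le₀
      (by exact_mod_cast Nat.one_le_iff_ne_zero.mpr (Nat.sub_ne_zero_of_lt hℓk))
      (by positivity)
  have key : blockContrast k ℓ v I - blockContrast k ℓ w I
      = (1 / (ℓ : ℝ)) * ∑ i ∈ I, (v i - w i)
        - (1 / ((k - ℓ : ℕ) : ℝ)) * ∑ i ∈ Iᶜ, (v i - w i) := by
    simp only [blockContrast, Finset.sum_sub_distrib, mul_sub]; ring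
  rw [key]
  calc |(1 / (ℓ : ℝ)) * ∑ i ∈ I, (v i - w i)
        - (1 / ((k - ℓ : ℕ) : ℝ)) * ∑ i ∈ Iᶜ, (v i - w i)|
      ≤ |(1 / (ℓ : ℝ)) * ∑ i ∈ I, (v i - w i)|
        + |(1 / ((k - ℓ : ℕ) : ℝ)) * ∑ i ∈ Iᶜ, (v i - w i)| := abs_sub _ _
    _ ≤ (∑ i ∈ I, |v i - w i|) + ∑ i ∈ Iᶜ, |v i - w i| := by
        gcongr
        · rw [abs_mul, abs_of_nonneg (by positivity : (0:ℝ) ≤ 1 / (ℓ : ℝ))]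
          calc (1 / (ℓ : ℝ)) * |∑ i ∈ I, (v i - w i)|
              ≤ 1 * |∑ i ∈ I, (v i - w i)| := by gcongr
            _ ≤ ∑ i ∈ I, |v i - w i| := by rw [one_mul]; exact Finset.abs_sum_le_sum_abs _ _
        · rw [abs_mul, abs_of_nonneg (by positivity : (0:ℝ) ≤ 1 / ((k - ℓ : ℕ) : ℝ))]
          calc (1 / ((k - ℓ : ℕ) : ℝ)) * |∑ i ∈ Iᶜ, (v i - w i)|
              ≤ 1 * |∑ i ∈ Iᶜ, (v i - w i)| := by gcongr
            _ ≤ ∑ i ∈ Iᶜ, |v i - w i| := by rw [one_mul]; exact Finset.abs_sum_le_sum_abs _ _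
    _ = ∑ i, |v i - w i| := by
        rw [← Finset.sum_add_sum_compl I]

lemma contrastRange_diff_le (k ℓ : ℕ) (hℓ : 1 ≤ ℓ) (hℓk : ℓ < k)
    (v w : Fin k → ℝ) :
    |contrastRange k ℓ v - contrastRange k ℓ w| ≤ 2 * ∑ i, |v i - w i| := by
  set S := ∑ i, |v i - w i| with hS
  have hS0 : 0 ≤ S := Finset.sum_nonneg fun i _ => abs_nonneg _
  set A : (Fin k → ℝ) → Set ℝ := fun u =>
    {r : ℝ | ∃ I : Finset (Fin k), I.card = ℓ ∧ r = blockContrast k ℓ u I} with hA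
  have hfin : ∀ u, (A u).Finite := fun u => by
    have : A u ⊆ Set.range (blockContrast k ℓ u) := by
      rintro r ⟨I, _, rfl⟩; exact ⟨I, rfl⟩
    exact (Set.finite_range _).subset this
  obtain ⟨I₀, -, hI₀⟩ := Finset.exists_subset_card_eq (s := (Finset.univ : Finset (Fin k))) (n := ℓ)
    (by simpa using hℓk.le)
  have hne : ∀ u, (A u).Nonempty := fun u => ⟨_, I₀, hI₀, rfl⟩
  have hbddA : ∀ u, BddAbove (A u) := fun u => (hfin u).bddAbove
  have hbddB : ∀ u, BddBelow (A u) := fun u => (hfin u).bddBelow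
  have hsup : ∀ u u', sSup (A u) ≤ sSup (A u') + ∑ i, |u i - u' i| := by
    intro u u'
    apply csSup_le (hne u)
    rintro r ⟨I, hI, rfl⟩
    have h1 : blockContrast k ℓ u I - blockContrast k ℓ u' I ≤ ∑ i, |u i - u' i| :=
      (le_abs_self _).trans (blockContrast_diff_le k ℓ hℓ hℓk u u' I)
    have h2 : blockContrast k ℓ u' I ≤ sSup (A u') :=
      le_csSup (hbddA u') ⟨I, hI, rfl⟩
    linarith
  have hinf : ∀ u u', sInf (A u') - ∑ i, |u i - u' i| ≤ sInf (A u) := by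
    intro u u'
    apply le_csInf (hne u)
    rintro r ⟨I, hI, rfl⟩
    have h1 : blockContrast k ℓ u' I - blockContrast k ℓ u I ≤ ∑ i, |u i - u' i| := by
      have h := (le_abs_self _).trans (blockContrast_diff_le k ℓ hℓ hℓk u' u I)
      have hsum : ∑ i, |u' i - u i| = ∑ i, |u i - u' i| :=
        Finset.sum_congr rfl fun i _ => abs_sub_comm _ _
      rw [hsum] at h; exact h
    have h2 : sInf (A u') ≤ blockContrast k ℓ u' I := csInf_le (hbddB u') ⟨I, hI, rfl⟩
    linarith
  have hcomm : ∑ i, |w i - v i| = S := by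
    simp only [hS]; exact Finset.sum_congr rfl fun i _ => abs_sub_comm _ _
  have e1 := hsup v w
  have e2 := hsup w v
  have e3 := hinf v w
  have e4 := hinf w v
  rw [hcomm] at e2 e4
  have : contrastRange k ℓ v = sSup (A v) - sInf (A v) := rfl
  rw [abs_le]
  constructor <;> simp only [contrastRange] <;>
    [linarith [e2, e3]; linarith [e1, e4]]

/-- **Lemma A.7.** For all `f, g : ℝ^{d_x} → ℝ` and all points
`x₁, …, x_k ∈ ℝ^{d_x}`,
`|h_f(x₁,…,x_k) − h_g(x₁,…,x_k)|² ≤ 4k · Σ_{i=1}^k (f(x_i) − g(x_i))²`. -/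
theorem contrastRange_sq_diff_le
    (dx k ℓ : ℕ) (hℓ : 1 ≤ ℓ) (hℓk : ℓ < k)
    (f g : (Fin dx → ℝ) → ℝ) (x : Fin k → (Fin dx → ℝ)) :
    |contrastRange k ℓ (fun i => f (x i)) - contrastRange k ℓ (fun i => g (x i))| ^ 2
      ≤ 4 * (k : ℝ) * ∑ i, (f (x i) - g (x i)) ^ 2 := by
  set v : Fin k → ℝ := fun i => f (x i)
  set w : Fin k → ℝ := fun i => g (x i)
  have h1 : |contrastRange k ℓ v - contrastRange k ℓ w| ≤ 2 * ∑ i, |v i - w i| :=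
    contrastRange_diff_le k ℓ hℓ hℓk v w
  have hS0 : (0:ℝ) ≤ ∑ i, |v i - w i| := Finset.sum_nonneg fun i _ => abs_nonneg _
  have h2 : |contrastRange k ℓ v - contrastRange k ℓ w| ^ 2
      ≤ (2 * ∑ i, |v i - w i|) ^ 2 := by
    apply pow_le_pow_left₀ (abs_nonneg _) h1
  have hCS : (∑ i, |v i - w i|) ^ 2 ≤ (k : ℝ) * ∑ i, (v i - w i) ^ 2 := by
    have := sq_sum_le_card_mul_sum_sq (s := (Finset.univ : Finset (Fin k)))
      (f := fun i => |v i - w i|)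
    simpa [sq_abs] using this
  calc |contrastRange k ℓ v - contrastRange k ℓ w| ^ 2
      ≤ (2 * ∑ i, |v i - w i|) ^ 2 := h2
    _ = 4 * (∑ i, |v i - w i|) ^ 2 := by ring
    _ ≤ 4 * ((k : ℝ) * ∑ i, (v i - w i) ^ 2) := by linarith
    _ = 4 * (k : ℝ) * ∑ i, (v i - w i) ^ 2 := by ring
end
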